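/- Let L : L²(μ) → L²(μ') be the lift L f = f ∘ T with pushforward density ρ satisfying |ρ - 1| ≤ c h² a.e. Then the operator norm of L* - L⁻¹ from L²(μ') to L²(μ) is at most c h² · ‖L⁻¹‖, where L⁻¹ g = g ∘ T⁻¹. In particular ‖L* - L⁻¹‖ ≤ c h² (1 - c h²)^{-1/2} whenever c h² < 1. -/

import Mathlib

open MeasureTheory

lemma aux_cov {Ω Ω' : Type*} [MeasurableSpace Ω] [MeasurableSpace Ω']
    (μ : Measure Ω) (μ' : Measure Ω') (T : Ω' ≃ᵐ Ω)
    (ρ : Ω → ENNReal) (hρ : Measurable ρ) (hfin : ∀ᵐ z ∂μ, ρ z ≠ ⊤)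
    (hpush : Measure.map T μ' = μ.withDensity ρ) (φ : Ω → ℝ) :
    ∫ y, φ (T y) ∂μ' = ∫ z, (ρ z).toReal * φ z ∂μ := by
  have h1 : ∫ y, φ (T y) ∂μ' = ∫ z, φ z ∂(Measure.map T μ') :=
    (MeasureTheory.integral_map_equiv T φ).symm
  have h2 : μ.withDensity ρ = μ.withDensity (fun z => ((ρ z).toNNReal : ENNReal)) :=
    withDensity_congr_ae (hfin.mono fun z hz => (ENNReal.coe_toNNReal hz).symm)
  rw [h1, hpush, h2, integral_withDensity_eq_integral_smul hρ.ennreal_toNNReal]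
  rfl

set_option maxHeartbeats 1000000 in
theorem stmt_12
    {Ω Ω' : Type*} [MeasurableSpace Ω] [MeasurableSpace Ω']
    (μ : Measure Ω) (μ' : Measure Ω')
    (T : Ω' ≃ᵐ Ω)
    (ρ : Ω → ENNReal) (hρ : Measurable ρ)
    (c h : ℝ) (hc : 0 < c) (hh : 0 ≤ h) (hch : c * h^2 < 1)
    (hpush : Measure.map T μ' = μ.withDensity ρ)
    (hdens : ∀ᵐ x ∂μ, |(ρ x).toReal - 1| ≤ c * h^2)
    (L : Lp ℝ 2 μ ≃L[ℝ] Lp ℝ 2 μ')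
    (hL : ∀ f : Lp ℝ 2 μ, (L f : Ω' → ℝ) =ᵐ[μ'] fun x => f (T x))
    (hLinv : ∀ g : Lp ℝ 2 μ', (L.symm g : Ω → ℝ) =ᵐ[μ] fun x => g (T.symm x)) :
    ‖ContinuousLinearMap.adjoint (L : Lp ℝ 2 μ →L[ℝ] Lp ℝ 2 μ')
        - (L.symm : Lp ℝ 2 μ' →L[ℝ] Lp ℝ 2 μ)‖
      ≤ c * h^2 * ‖(L.symm : Lp ℝ 2 μ' →L[ℝ] Lp ℝ 2 μ)‖ ∧
    ‖ContinuousLinearMap.adjoint (L : Lp ℝ 2 μ →L[ℝ] Lp ℝ 2 μ')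
        - (L.symm : Lp ℝ 2 μ' →L[ℝ] Lp ℝ 2 μ)‖
      ≤ c * h^2 / Real.sqrt (1 - c * h^2) := by
  have hch0 : 0 ≤ c * h ^ 2 := by positivity
  set L' := (L : Lp ℝ 2 μ →L[ℝ] Lp ℝ 2 μ') with hL'def
  set Li := (L.symm : Lp ℝ 2 μ' →L[ℝ] Lp ℝ 2 μ) with hLidef
  set A := ContinuousLinearMap.adjoint L' - Li with hAdef
  -- finiteness of the density a.e.
  have hfin : ∀ᵐ z ∂μ, ρ z ≠ ⊤ := by
    filter_upwards [hdens] with z hz hinf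
    rw [hinf] at hz
    simp only [ENNReal.toReal_top, zero_sub, abs_neg, abs_one] at hz
    linarith
  have cov := aux_cov μ μ' T ρ hρ hfin hpush
  -- inner product formulas
  have hinner1 : ∀ (g : Lp ℝ 2 μ') (f : Lp ℝ 2 μ),
      (inner ℝ g (L' f) : ℝ) = ∫ z, (ρ z).toReal * (g (T.symm z) * f z) ∂μ := by
    intro g f
    rw [L2.inner_def, ← cov (fun z => g (T.symm z) * f z)]
    apply integral_congr_ae
    filter_upwards [hL f] with y hy
    simp [RCLike.inner_apply, hL'def, hy, mul_comm]
  have hinner2 : ∀ (g : Lp ℝ 2 μ') (f : Lp ℝ 2 μ),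
      (inner ℝ (Li g) f : ℝ) = ∫ z, g (T.symm z) * f z ∂μ := by
    intro g f
    rw [L2.inner_def]
    apply integral_congr_ae
    filter_upwards [hLinv g] with z hz
    simp [RCLike.inner_apply, hLidef, hz, mul_comm]
  -- integrability facts
  have hGf : ∀ (g : Lp ℝ 2 μ') (f : Lp ℝ 2 μ),
      Integrable (fun z => g (T.symm z) * f z) μ := by
    intro g f
    have h0 : Integrable (fun z => (inner ℝ ((L.symm g : Ω → ℝ) z) ((f : Ω → ℝ) z) : ℝ)) μ :=
      L2.integrable_inner (𝕜 := ℝ) (L.symm g) f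
    refine h0.congr ?_
    filter_upwards [hLinv g] with z hz
    simp [RCLike.inner_apply, hz, mul_comm]
  have huf : ∀ (g : Lp ℝ 2 μ') (f : Lp ℝ 2 μ),
      Integrable (fun z => ((ρ z).toReal - 1) * (g (T.symm z) * f z)) μ := by
    intro g f
    refine Integrable.mono' (((hGf g f).abs).const_mul (c * h ^ 2)) ?_ ?_
    · exact ((hρ.ennreal_toReal.sub measurable_const).aestronglyMeasurable).mul (hGf g f).1
    · filter_upwards [hdens] with z hz
      rw [Real.norm_eq_abs, abs_mul]
      exact mul_le_mul_of_nonneg_right hz (abs_nonneg _)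
  have hρGf : ∀ (g : Lp ℝ 2 μ') (f : Lp ℝ 2 μ),
      Integrable (fun z => (ρ z).toReal * (g (T.symm z) * f z)) μ := by
    intro g f
    refine ((huf g f).add (hGf g f)).congr ?_
    filter_upwards with z
    simp only [Pi.add_apply]
    ring
  -- the key integral identity for A
  have key : ∀ (g : Lp ℝ 2 μ') (f : Lp ℝ 2 μ),
      (inner ℝ (A g) f : ℝ) = ∫ z, ((ρ z).toReal - 1) * (g (T.symm z) * f z) ∂μ := by
    intro g f
    have e0 : (inner ℝ (A g) f : ℝ) = (inner ℝ g (L' f) : ℝ) - (inner ℝ (Li g) f : ℝ) := by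
      rw [hAdef]
      rw [ContinuousLinearMap.sub_apply, inner_sub_left,
        ContinuousLinearMap.adjoint_inner_left]
    rw [e0, hinner1, hinner2, ← integral_sub (hρGf g f) (hGf g f)]
    apply integral_congr_ae
    filter_upwards with z
    ring
  -- pointwise bound on A g
  have hAg : ∀ g : Lp ℝ 2 μ', ‖A g‖ ≤ c * h ^ 2 * ‖Li g‖ := by
    intro g
    set g₂ : Lp ℝ 2 μ := L.symm g with hg₂
    set u : Ω → ℝ := fun z => ((ρ z).toReal - 1) * g₂ z with hu
    have hu_mem : MemLp u 2 μ := by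
      refine MemLp.of_le ((Lp.memLp g₂).const_mul (c * h ^ 2)) ?_ ?_
      · exact ((hρ.ennreal_toReal.sub measurable_const).aestronglyMeasurable).mul
          (Lp.aestronglyMeasurable g₂)
      · filter_upwards [hdens] with z hz
        rw [Real.norm_eq_abs, Real.norm_eq_abs, abs_mul, abs_mul, abs_of_nonneg hch0]
        exact mul_le_mul_of_nonneg_right hz (abs_nonneg _)
    set U : Lp ℝ 2 μ := hu_mem.toLp u with hU
    have hUnorm : ‖U‖ ≤ c * h ^ 2 * ‖g₂‖ := by
      rw [hU, Lp.norm_toLp]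
      have h1 : eLpNorm u 2 μ ≤ eLpNorm ((c * h ^ 2) • (g₂ : Ω → ℝ)) 2 μ := by
        apply eLpNorm_mono_ae
        filter_upwards [hdens] with z hz
        simp only [Pi.smul_apply, smul_eq_mul, Real.norm_eq_abs, abs_mul,
          abs_of_nonneg hch0, hu]
        exact mul_le_mul_of_nonneg_right hz (abs_nonneg _)
      rw [eLpNorm_const_smul] at h1
      have h2 : ((‖c * h ^ 2‖₊ : ENNReal) * eLpNorm (g₂ : Ω → ℝ) 2 μ).toReal
          = c * h ^ 2 * ‖g₂‖ := by
        rw [ENNReal.toReal_mul, ENNReal.coe_toReal, coe_nnnorm, ← Lp.norm_def,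
          Real.norm_eq_abs, abs_of_nonneg hch0]
      rw [← h2]
      refine ENNReal.toReal_mono ?_ h1
      exact ENNReal.mul_ne_top ENNReal.coe_ne_top (Lp.eLpNorm_ne_top g₂)
    have hid : (inner ℝ (A g) (A g) : ℝ) = (inner ℝ U (A g) : ℝ) := by
      rw [key g (A g), L2.inner_def]
      apply integral_congr_ae
      filter_upwards [hu_mem.coeFn_toLp, hLinv g] with z h1 h2
      rw [RCLike.inner_apply]
      rw [hU, h1]
      simp only [starRingEnd_apply, star_trivial, hU, h1, hu, hg₂, h2]
      ring
    have hsq : ‖A g‖ ^ 2 ≤ (c * h ^ 2 * ‖Li g‖) * ‖A g‖ := by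
      have := real_inner_self_eq_norm_sq (A g)
      calc ‖A g‖ ^ 2 = (inner ℝ (A g) (A g) : ℝ) := this.symm
        _ = (inner ℝ U (A g) : ℝ) := hid
        _ ≤ ‖U‖ * ‖A g‖ := real_inner_le_norm U (A g)
        _ ≤ (c * h ^ 2 * ‖g₂‖) * ‖A g‖ :=
            mul_le_mul_of_nonneg_right hUnorm (norm_nonneg _)
        _ = (c * h ^ 2 * ‖Li g‖) * ‖A g‖ := rfl
    have hM : 0 ≤ c * h ^ 2 * ‖Li g‖ := by positivity
    nlinarith [hsq, norm_nonneg (A g), hM]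
  -- first bound
  have first : ‖A‖ ≤ c * h ^ 2 * ‖Li‖ := by
    refine ContinuousLinearMap.opNorm_le_bound A (by positivity) fun g => ?_
    calc ‖A g‖ ≤ c * h ^ 2 * ‖Li g‖ := hAg g
      _ ≤ c * h ^ 2 * (‖Li‖ * ‖g‖) :=
          mul_le_mul_of_nonneg_left (Li.le_opNorm g) hch0
      _ = c * h ^ 2 * ‖Li‖ * ‖g‖ := by ring
  -- norm bound on L.symm
  have h1ch : 0 < 1 - c * h ^ 2 := by linarith
  have hs : 0 < Real.sqrt (1 - c * h ^ 2) := Real.sqrt_pos.mpr h1ch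
  have hlow : ∀ f : Lp ℝ 2 μ, Real.sqrt (1 - c * h ^ 2) * ‖f‖ ≤ ‖L' f‖ := by
    intro f
    have intf : Integrable (fun z => (f : Ω → ℝ) z * f z) μ := by
      have h0 := L2.integrable_inner (𝕜 := ℝ) f f
      refine h0.congr ?_
      filter_upwards with z
      simp [RCLike.inner_apply, sq]
    have intρf : Integrable (fun z => (ρ z).toReal * ((f : Ω → ℝ) z * f z)) μ := by
      refine Integrable.mono' (intf.abs.const_mul (1 + c * h ^ 2)) ?_ ?_
      · exact (hρ.ennreal_toReal.aestronglyMeasurable).mul intf.1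
      · filter_upwards [hdens] with z hz
        rw [Real.norm_eq_abs, abs_mul]
        have hρz : |(ρ z).toReal| ≤ 1 + c * h ^ 2 := by
          rw [abs_le] at hz ⊢
          constructor <;> linarith
        exact mul_le_mul_of_nonneg_right hρz (abs_nonneg _)
    have e1 : ‖L' f‖ ^ 2 = ∫ z, (ρ z).toReal * ((f : Ω → ℝ) z * f z) ∂μ := by
      rw [← real_inner_self_eq_norm_sq, L2.inner_def,
        ← cov (fun z => (f : Ω → ℝ) z * f z)]
      apply integral_congr_ae
      filter_upwards [hL f] with y hy
      simp [RCLike.inner_apply, hL'def, hy, sq]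
    have e2 : ‖f‖ ^ 2 = ∫ z, (f : Ω → ℝ) z * f z ∂μ := by
      rw [← real_inner_self_eq_norm_sq, L2.inner_def]
      apply integral_congr_ae
      filter_upwards with z
      simp [RCLike.inner_apply, sq]
    have hmono : (1 - c * h ^ 2) * ‖f‖ ^ 2 ≤ ‖L' f‖ ^ 2 := by
      rw [e1, e2, ← integral_const_mul]
      refine integral_mono_ae (intf.const_mul _) intρf ?_
      filter_upwards [hdens] with z hz
      have h3 : 1 - c * h ^ 2 ≤ (ρ z).toReal := by
        rw [abs_le] at hz; linarith
      have h4 : 0 ≤ (f : Ω → ℝ) z * f z := mul_self_nonneg _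
      exact mul_le_mul_of_nonneg_right h3 h4
    have := Real.sqrt_le_sqrt hmono
    rwa [Real.sqrt_mul h1ch.le, Real.sqrt_sq (norm_nonneg f),
      Real.sqrt_sq (norm_nonneg (L' f))] at this
  have hLiNorm : ‖Li‖ ≤ (Real.sqrt (1 - c * h ^ 2))⁻¹ := by
    refine ContinuousLinearMap.opNorm_le_bound Li (by positivity) fun g => ?_
    have h0 := hlow (Li g)
    have h1 : ‖L' (Li g)‖ = ‖g‖ := by
      have : L' (Li g) = g := L.apply_symm_apply g
      rw [this]
    rw [h1] at h0
    rw [inv_mul_eq_div, le_div_iff₀ hs, mul_comm]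
    exact h0
  refine ⟨first, ?_⟩
  calc ‖A‖ ≤ c * h ^ 2 * ‖Li‖ := first
    _ ≤ c * h ^ 2 * (Real.sqrt (1 - c * h ^ 2))⁻¹ :=
        mul_le_mul_of_nonneg_left hLiNorm hch0
    _ = c * h ^ 2 / Real.sqrt (1 - c * h ^ 2) := by rw [div_eq_mul_inv]
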